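/- Let A = (S, f_c, f_d) with q ∈ S satisfying f_c(x,q,y) = f_d(x,q,y) = q for all x,y. If in the initial configuration at time 0 cell j is in state q, then for every cell i ≤ j, the state of cell i at any time t ≥ 0 is the same in all evolutions of A with that initial configuration (i.e., cells to the left of a permanently quiescent cell evolve deterministically). -/

import Mathlib

/-- An evolution of a self-similar cellular automaton `(S, fc, fd)` started at time 0:
`c j k` is the state of cell `j ∈ ℤ` during its cycle `(k+𝟙)/2^j`, `k ∈ ℕ`.
Cycle `k ≥ 1` of cell `j` is coupled iff `k` is even, and the state is obtained by
applying `fc` (resp. `fd`) to the states of the last cycles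
`T↙ = (⌊(k-1)/2⌋+𝟙)/2^(j-1)`, `T↓ = (k-1+𝟙)/2^j`, `T↘ = (2k-1+𝟙)/2^(j+1)`;
cycle 0 carries the initial configuration. -/
def Evolution {S : Type*} (fc fd : S → S → S → S) (init : ℤ → S) (c : ℤ → ℕ → S) : Prop :=
  (∀ j, c j 0 = init j) ∧
  ∀ (j : ℤ) (k : ℕ), 0 < k →
    c j k = (if Even k then fc else fd)
      (c (j - 1) ((k - 1) / 2)) (c j (k - 1)) (c (j + 1) (2 * k - 1))

/-- If `q` satisfies `fc x q y = fd x q y = q` for all `x, y` and cell `j` is in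
state `q` in the initial configuration, then every cell `i ≤ j` evolves
deterministically: its state at every time is the same in all evolutions with that
initial configuration. -/
theorem ssca_deterministic_left_of_quiescent {S : Type*} (fc fd : S → S → S → S) (q : S)
    (hq : ∀ x y : S, fc x q y = q ∧ fd x q y = q)
    (init : ℤ → S) (j : ℤ) (hj : init j = q) :
    ∀ c₁ c₂ : ℤ → ℕ → S, Evolution fc fd init c₁ → Evolution fc fd init c₂ →
      ∀ i : ℤ, i ≤ j → ∀ k : ℕ, c₁ i k = c₂ i k := by
  intro c₁ c₂ h₁ h₂
  -- cell j stays quiescent forever in any evolution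
  have quiet : ∀ c : ℤ → ℕ → S, Evolution fc fd init c → ∀ k, c j k = q := by
    intro c hc k
    induction k using Nat.strong_induction_on with
    | _ k ih =>
      rcases Nat.eq_zero_or_pos k with h | h
      · subst h; rw [hc.1]; exact hj
      · rw [hc.2 j k h, ih (k - 1) (by omega)]
        by_cases he : Even k <;> simp [he, (hq _ _).1, (hq _ _).2]
  suffices H : ∀ m : ℕ, ∀ k : ℕ, ∀ i : ℤ, i ≤ j →
      (k + 1) * 2 ^ (j - i).toNat ≤ m → c₁ i k = c₂ i k by
    intro i hi k
    exact H ((k + 1) * 2 ^ (j - i).toNat) k i hi le_rfl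
  intro m
  induction m using Nat.strong_induction_on with
  | _ m ihm =>
  intro k
  induction k using Nat.strong_induction_on with
  | _ k ihk =>
  intro i hi hbound
  rcases hi.eq_or_lt with rfl | hlt
  · rw [quiet c₁ h₁ k, quiet c₂ h₂ k]
  rcases Nat.eq_zero_or_pos k with h0 | h0
  · subst h0; rw [h₁.1, h₂.1]
  set E := (j - i).toNat with hE
  have hE1 : 1 ≤ E := by omega
  have hEl : (j - (i - 1)).toNat = E + 1 := by omega
  have hEr : (j - (i + 1)).toNat = E - 1 := by omega
  have hpow : 0 < 2 ^ E := Nat.pow_pos (by norm_num)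
  have hkm : k * 2 ^ E < m :=
    lt_of_lt_of_le ((Nat.mul_lt_mul_right hpow).mpr (by omega)) hbound
  -- left dependency: same measure, smaller k
  have ha : c₁ (i - 1) ((k - 1) / 2) = c₂ (i - 1) ((k - 1) / 2) := by
    apply ihk ((k - 1) / 2) (by omega) (i - 1) (by omega)
    rw [hEl]
    calc ((k - 1) / 2 + 1) * 2 ^ (E + 1) = (2 * ((k - 1) / 2) + 2) * 2 ^ E := by ring
    _ ≤ (k + 1) * 2 ^ E := Nat.mul_le_mul_right _ (by omega)
    _ ≤ m := hbound
  -- bottom dependency: strictly smaller measure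
  have hb : c₁ i (k - 1) = c₂ i (k - 1) := by
    apply ihm (k * 2 ^ E) hkm (k - 1) i (le_of_lt hlt)
    have : k - 1 + 1 = k := by omega
    rw [this]
  -- right dependency: strictly smaller measure
  have hc : c₁ (i + 1) (2 * k - 1) = c₂ (i + 1) (2 * k - 1) := by
    apply ihm (k * 2 ^ E) hkm (2 * k - 1) (i + 1) (by omega)
    rw [hEr]
    have h2 : 2 * k - 1 + 1 = 2 * k := by omega
    rw [h2]
    have : 2 * k * 2 ^ (E - 1) = k * (2 * 2 ^ (E - 1)) := by ring
    rw [this, ← pow_succ']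
    have : E - 1 + 1 = E := by omega
    rw [this]
  rw [h₁.2 i k h0, h₂.2 i k h0, ha, hb, hc]
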